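/- Let f : K^{•,•} → L^{•,•} be a morphism of first-quadrant double complexes (with anti-commuting differentials). If for every p ≥ 0 the induced morphism of row complexes f^{p,•} : K^{p,•} → L^{p,•} induces an isomorphism in cohomology, then the induced morphism of total complexes Tf : T_K^• → T_L^• induces an isomorphism in cohomology. -/
import Mathlib


namespace DoubleComplexComparison

variable {R : Type*} [Ring R]

/-- The total differential `∂ = d + δ` of a (first-quadrant, anti-commutative) double
complex, acting on elements of the total complex realised inside the full product. -/
def totD {K : ℕ → ℕ → Type*} [∀ p q, AddCommGroup (K p q)] [∀ p q, Module R (K p q)]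
    (d : ∀ p q, K p q →ₗ[R] K p (q + 1)) (δ : ∀ p q, K p q →ₗ[R] K (p + 1) q)
    (f : ∀ p q, K p q) : ∀ p q, K p q := fun p q =>
  (match (motive := ∀ q, K p q) q with
    | 0 => (0 : K p 0)
    | Nat.succ q' => d p q' (f p q')) +
  (match (motive := ∀ p, K p q) p with
    | 0 => (0 : K 0 q)
    | Nat.succ p' => δ p' q (f p' q))

section Helpers

variable {K : ℕ → ℕ → Type*} [∀ p q, AddCommGroup (K p q)] [∀ p q, Module R (K p q)]

/-- family supported at a single position -/
def single (a b : ℕ) (v : K a b) : ∀ p q, K p q :=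
  Function.update (fun _ _ => 0) a (Function.update (fun _ => 0) b v)

theorem single_self (a b : ℕ) (v : K a b) : single a b v a b = v := by
  simp [single]

theorem single_ne (a b : ℕ) (v : K a b) {p q : ℕ} (h : ¬(p = a ∧ q = b)) :
    single a b v p q = 0 := by
  by_cases hp : p = a
  · subst hp
    have hq : q ≠ b := fun h' => h ⟨rfl, h'⟩
    simp [single, Function.update_of_ne hq]
  · simp [single, Function.update_of_ne hp]

variable (d : ∀ p q, K p q →ₗ[R] K p (q + 1)) (δ : ∀ p q, K p q →ₗ[R] K (p + 1) q)

theorem totD_ss (g : ∀ p q, K p q) (p q : ℕ) :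
    totD d δ g (p + 1) (q + 1)
      = d (p + 1) q (g (p + 1) q) + δ p (q + 1) (g p (q + 1)) := rfl

theorem totD_zs (g : ∀ p q, K p q) (q : ℕ) :
    totD d δ g 0 (q + 1) = d 0 q (g 0 q) := add_zero _

theorem totD_sz (g : ∀ p q, K p q) (p : ℕ) :
    totD d δ g (p + 1) 0 = δ p 0 (g p 0) := zero_add _

theorem totD_zz (g : ∀ p q, K p q) : totD d δ g 0 0 = 0 := add_zero 0

theorem totD_eq_zero (g : ∀ p q, K p q) (p q : ℕ)
    (h1 : ∀ q', q = q' + 1 → g p q' = 0) (h2 : ∀ p', p = p' + 1 → g p' q = 0) :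
    totD d δ g p q = 0 := by
  obtain _ | p' := p <;> obtain _ | q' := q
  · exact totD_zz d δ g
  · rw [totD_zs, h1 q' rfl, map_zero]
  · rw [totD_sz, h2 p' rfl, map_zero]
  · rw [totD_ss, h1 q' rfl, h2 p' rfl, map_zero, map_zero, add_zero]

theorem totD_succ_left (g : ∀ p q, K p q) (p q : ℕ)
    (h : ∀ q', q = q' + 1 → g (p + 1) q' = 0) :
    totD d δ g (p + 1) q = δ p q (g p q) := by
  obtain _ | q' := q
  · exact totD_sz d δ g p
  · rw [totD_ss, h q' rfl, map_zero, zero_add]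

theorem totD_add (g g' : ∀ p q, K p q) (p q : ℕ) :
    totD d δ (fun a b => g a b + g' a b) p q = totD d δ g p q + totD d δ g' p q := by
  obtain _ | p' := p <;> obtain _ | q' := q
  · rw [totD_zz, totD_zz, totD_zz, add_zero]
  · rw [totD_zs, totD_zs, totD_zs]; exact map_add _ _ _
  · rw [totD_sz, totD_sz, totD_sz]; exact map_add _ _ _
  · rw [totD_ss, totD_ss, totD_ss, map_add, map_add]; abel

theorem delta_d_totD (hδδ : ∀ p q (x : K p q), δ (p + 1) q (δ p q x) = 0)
    (g : ∀ p q, K p q) (p q : ℕ) (c : K p (q + 1)) (h : totD d δ g p (q + 1) = c) :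
    δ p (q + 1) (d p q (g p q)) = δ p (q + 1) c := by
  obtain _ | p' := p
  · rw [totD_zs] at h; rw [h]
  · rw [totD_ss] at h
    have h' : d (p' + 1) q (g (p' + 1) q) = c - δ p' (q + 1) (g p' (q + 1)) :=
      eq_sub_of_add_eq h
    rw [h', map_sub, hδδ, sub_zero]

theorem delta_totD (hδδ : ∀ p q (x : K p q), δ (p + 1) q (δ p q x) = 0)
    (g : ∀ p q, K p q) (p q : ℕ) :
    δ p (q + 1) (totD d δ g p (q + 1)) = δ p (q + 1) (d p q (g p q)) := by
  obtain _ | p' := p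
  · rw [totD_zs]
  · rw [totD_ss, map_add, hδδ, add_zero]

theorem delta_totD_zero (hδδ : ∀ p q (x : K p q), δ (p + 1) q (δ p q x) = 0)
    (g : ∀ p q, K p q) (p : ℕ) :
    δ p 0 (totD d δ g p 0) = 0 := by
  obtain _ | p' := p
  · rw [totD_zz, map_zero]
  · rw [totD_sz, hδδ]

end Helpers

/-- **Theorem (comparison of double complexes).**  Let `f : K^{•,•} → L^{•,•}` be a
morphism of first-quadrant double complexes of `R`-modules (with anti-commuting
differentials).  If for every `p ≥ 0` the induced morphism of row complexes
`f^{p,•} : K^{p,•} → L^{p,•}` induces an isomorphism in cohomology (stated below as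
surjectivity and injectivity in each degree of each row), then the induced morphism of
total complexes `Tf : T_K^• → T_L^•` induces an isomorphism in cohomology (stated below as
surjectivity and injectivity in each degree `n`; elements of `T^n` are encoded as
functions `∀ p q, _` vanishing for `p + q ≠ n`). -/
theorem total_quasiIso_of_rows_quasiIso
    {K L : ℕ → ℕ → Type*}
    [∀ p q, AddCommGroup (K p q)] [∀ p q, Module R (K p q)]
    [∀ p q, AddCommGroup (L p q)] [∀ p q, Module R (L p q)]
    (dK : ∀ p q, K p q →ₗ[R] K p (q + 1)) (δK : ∀ p q, K p q →ₗ[R] K (p + 1) q)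
    (dL : ∀ p q, L p q →ₗ[R] L p (q + 1)) (δL : ∀ p q, L p q →ₗ[R] L (p + 1) q)
    (hddK : ∀ p q (x : K p q), dK p (q + 1) (dK p q x) = 0)
    (hδδK : ∀ p q (x : K p q), δK (p + 1) q (δK p q x) = 0)
    (hantiK : ∀ p q (x : K p q), dK (p + 1) q (δK p q x) + δK p (q + 1) (dK p q x) = 0)
    (hddL : ∀ p q (x : L p q), dL p (q + 1) (dL p q x) = 0)
    (hδδL : ∀ p q (x : L p q), δL (p + 1) q (δL p q x) = 0)
    (hantiL : ∀ p q (x : L p q), dL (p + 1) q (δL p q x) + δL p (q + 1) (dL p q x) = 0)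
    (f : ∀ p q, K p q →ₗ[R] L p q)
    (hfd : ∀ p q (x : K p q), f p (q + 1) (dK p q x) = dL p q (f p q x))
    (hfδ : ∀ p q (x : K p q), f (p + 1) q (δK p q x) = δL p q (f p q x))
    -- each row map `f^{p,•}` is surjective on cohomology …
    (hsurj0 : ∀ p (x : L p 0), dL p 0 x = 0 → ∃ y : K p 0, dK p 0 y = 0 ∧ f p 0 y = x)
    (hsurj : ∀ p q (x : L p (q + 1)), dL p (q + 1) x = 0 →
      ∃ y : K p (q + 1), dK p (q + 1) y = 0 ∧ ∃ z : L p q, f p (q + 1) y = x + dL p q z)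
    -- … and injective on cohomology
    (hinj0 : ∀ p (y : K p 0), dK p 0 y = 0 → f p 0 y = 0 → y = 0)
    (hinj : ∀ p q (y : K p (q + 1)), dK p (q + 1) y = 0 →
      (∃ z : L p q, f p (q + 1) y = dL p q z) → ∃ w : K p q, dK p q w = y) :
    -- then `Tf` is surjective on cohomology in every degree `n` …
    (∀ (n : ℕ) (x : ∀ p q, L p q), (∀ p q, p + q ≠ n → x p q = 0) →
      (∀ p q, totD dL δL x p q = 0) →
      ∃ y : ∀ p q, K p q, (∀ p q, p + q ≠ n → y p q = 0) ∧
        (∀ p q, totD dK δK y p q = 0) ∧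
        ∃ z : ∀ p q, L p q, (∀ p q, p + q + 1 ≠ n → z p q = 0) ∧
          ∀ p q, f p q (y p q) = x p q + totD dL δL z p q) ∧
    -- … and injective on cohomology in every degree `n`
    (∀ (n : ℕ) (y : ∀ p q, K p q), (∀ p q, p + q ≠ n → y p q = 0) →
      (∀ p q, totD dK δK y p q = 0) →
      (∃ z : ∀ p q, L p q, (∀ p q, p + q + 1 ≠ n → z p q = 0) ∧
        ∀ p q, f p q (y p q) = totD dL δL z p q) →
      ∃ w : ∀ p q, K p q, (∀ p q, p + q + 1 ≠ n → w p q = 0) ∧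
        ∀ p q, y p q = totD dK δK w p q) := by
  have rowSurj : ∀ p q (e : L p q), dL p q e = 0 →
      ∃ u : K p q, dK p q u = 0 ∧ ∃ zf : ∀ a b, L a b,
        (∀ a b, ¬(a = p ∧ b + 1 = q) → zf a b = 0) ∧
        f p q u = e + totD dL δL zf p q := by
    intro p q e he
    obtain _ | q' := q
    · obtain ⟨u, hud, huf⟩ := hsurj0 p e he
      refine ⟨u, hud, fun _ _ => 0, fun _ _ _ => rfl, ?_⟩
      have h0 : totD dL δL (fun _ _ => (0 : L _ _)) p 0 = 0 :=
        totD_eq_zero dL δL _ p 0 (fun _ _ => rfl) (fun _ _ => rfl)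
      rw [h0, add_zero]; exact huf
    · obtain ⟨u, hud, znew, huf⟩ := hsurj p q' e he
      refine ⟨u, hud, single p q' znew, ?_, ?_⟩
      · intro a b h; exact single_ne p q' znew (fun hab => h ⟨hab.1, by omega⟩)
      · have h1 : totD dL δL (single p q' znew) p (q' + 1) = dL p q' znew := by
          obtain _ | p' := p
          · rw [totD_zs, single_self]
          · rw [totD_ss, single_self,
              single_ne _ _ _ (by rintro ⟨h1, _⟩; omega), map_zero, add_zero]
        rw [h1]; exact huf
  constructor
  · -- surjectivity on cohomology of total complexes
    intro n x hx hxc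
    have main : ∀ k, k ≤ n → ∃ (y : ∀ p q, K p q) (z : ∀ p q, L p q),
        (∀ a b, a + b ≠ n ∨ k < a → y a b = 0) ∧
        (∀ a b, a + b + 1 ≠ n ∨ k < a → z a b = 0) ∧
        (∀ a b, a + b = n + 1 → a ≤ k → totD dK δK y a b = 0) ∧
        (∀ a b, a + b = n → a ≤ k → f a b (y a b) = x a b + totD dL δL z a b) := by
      intro k
      induction k with
      | zero =>
        intro _
        have hdx : dL 0 n (x 0 n) = 0 := by
          have h := hxc 0 (n + 1); rwa [totD_zs] at h
        obtain ⟨y0, hy0d, zf, hzf, hy0f⟩ := rowSurj 0 n (x 0 n) hdx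
        refine ⟨single 0 n y0, zf, ?_, ?_, ?_, ?_⟩
        · intro a b h
          apply single_ne; rintro ⟨rfl, rfl⟩
          rcases h with h | h <;> omega
        · intro a b h
          apply hzf; rintro ⟨rfl, hb⟩
          rcases h with h | h <;> omega
        · intro a b hab ha
          have h0 : a = 0 := by omega
          subst h0
          have h0 : b = n + 1 := by omega
          subst h0
          rw [totD_zs, single_self, hy0d]
        · intro a b hab ha
          have h0 : a = 0 := by omega
          subst h0
          have h0 : b = n := by omega
          subst h0
          rw [single_self]; exact hy0f
      | succ k ih =>
        intro hk1
        obtain ⟨y, z, hy, hz, hcy, hfy⟩ := ih (by omega)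
        obtain ⟨q, hq⟩ : ∃ q, k + 1 + q = n := ⟨n - (k + 1), by omega⟩
        have hdyk : δK k (q + 1 + 1) (dK k (q + 1) (y k (q + 1))) = 0 := by
          have h := delta_d_totD dK δK hδδK y k (q + 1) 0
            (hcy k (q + 1 + 1) (by omega) le_rfl)
          rwa [map_zero] at h
        have hdv : dK (k + 1) (q + 1) (δK k (q + 1) (y k (q + 1))) = 0 := by
          have h := hantiK k (q + 1) (y k (q + 1))
          rwa [hdyk, add_zero] at h
        have hfv : f (k + 1) (q + 1) (δK k (q + 1) (y k (q + 1)))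
            = - dL (k + 1) q (x (k + 1) q + δL k q (z k q)) := by
          rw [hfδ, hfy k (q + 1) (by omega) le_rfl, map_add,
            delta_totD dL δL hδδL z k q]
          have h1 : δL k (q + 1) (x k (q + 1)) = - dL (k + 1) q (x (k + 1) q) := by
            have h := hxc (k + 1) (q + 1)
            rw [totD_ss] at h
            exact eq_neg_of_add_eq_zero_right h
          have h2 : δL k (q + 1) (dL k q (z k q)) = - dL (k + 1) q (δL k q (z k q)) :=
            eq_neg_of_add_eq_zero_right (hantiL k q (z k q))
          rw [h1, h2, map_add]; abel
        obtain ⟨w, hw⟩ := hinj (k + 1) q (- δK k (q + 1) (y k (q + 1)))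
          (by rw [map_neg, hdv, neg_zero])
          ⟨x (k + 1) q + δL k q (z k q), by rw [map_neg, hfv, neg_neg]⟩
        have hde : dL (k + 1) q (x (k + 1) q + δL k q (z k q) - f (k + 1) q w) = 0 := by
          rw [map_sub, ← hfd, hw, map_neg, hfv, neg_neg, sub_self]
        obtain ⟨u, hud, zf, hzf, huf⟩ := rowSurj (k + 1) q _ hde
        refine ⟨fun a b => y a b + single (k + 1) q (w + u) a b,
          fun a b => z a b + zf a b, ?_, ?_, ?_, ?_⟩
        · intro a b h
          show y a b + single (k + 1) q (w + u) a b = 0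
          rw [hy a b (h.imp id (fun h' => by omega)), zero_add]
          apply single_ne; rintro ⟨rfl, rfl⟩
          rcases h with h | h <;> omega
        · intro a b h
          show z a b + zf a b = 0
          rw [hz a b (h.imp id (fun h' => by omega)), zero_add]
          apply hzf; rintro ⟨rfl, hb⟩
          rcases h with h | h <;> omega
        · intro a b hab ha
          rw [totD_add]
          by_cases hak : a ≤ k
          · rw [hcy a b hab hak, zero_add]
            apply totD_eq_zero
            · intro q' hq'; apply single_ne; rintro ⟨rfl, rfl⟩; omega
            · intro p' hp'; apply single_ne; rintro ⟨rfl, rfl⟩; omega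
          · have h0 : a = k + 1 := by omega
            subst h0
            have h0 : b = q + 1 := by omega
            subst h0
            rw [totD_ss, totD_ss, single_self,
              single_ne _ _ _ (by rintro ⟨h1, _⟩; omega),
              hy (k + 1) q (Or.inr (by omega)), map_zero, map_zero, map_add, hw, hud]
            abel
        · intro a b hab ha
          show f a b (y a b + single (k + 1) q (w + u) a b)
            = x a b + totD dL δL (fun a b => z a b + zf a b) a b
          rw [map_add]
          by_cases hak : a ≤ k
          · rw [single_ne _ _ _ (by rintro ⟨rfl, rfl⟩; omega), map_zero, add_zero, totD_add,
              hfy a b hab hak]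
            have hzf0 : totD dL δL zf a b = 0 := by
              apply totD_eq_zero
              · intro q' hq'; apply hzf; rintro ⟨rfl, hb'⟩; omega
              · intro p' hp'; apply hzf; rintro ⟨rfl, hb'⟩; omega
            rw [hzf0, add_zero]
          · have h0 : a = k + 1 := by omega
            subst h0
            have h0 : q = b := by omega
            subst h0
            rw [hy (k + 1) q (Or.inr (by omega)), map_zero, zero_add, single_self, map_add, huf,
              totD_add,
              totD_succ_left dL δL z k q (fun q' hq' => hz (k + 1) q' (Or.inr (by omega)))]
            abel
    obtain ⟨y, z, hy, hz, hcy, hfy⟩ := main n le_rfl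
    refine ⟨y, fun p q h => hy p q (Or.inl h), ?_, z, fun p q h => hz p q (Or.inl h), ?_⟩
    · intro p q
      by_cases h1 : p + q = n + 1
      · by_cases h2 : p ≤ n
        · exact hcy p q h1 h2
        · have hp : p = n + 1 := by omega
          subst hp
          have hq0 : q = 0 := by omega
          subst hq0
          rw [totD_sz]
          apply hinj0 (n + 1)
          · have h := hantiK n 0 (y n 0)
            have h2 := delta_d_totD dK δK hδδK y n 0 0 (hcy n 1 (by omega) le_rfl)
            rw [map_zero] at h2
            rwa [h2, add_zero] at h
          · rw [hfδ, hfy n 0 (by omega) (by omega), map_add,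
              delta_totD_zero dL δL hδδL z n]
            have h := hxc (n + 1) 0
            rw [totD_sz] at h
            rw [h, add_zero]
      · apply totD_eq_zero
        · intro q' hq'; subst hq'; exact hy p q' (Or.inl (by omega))
        · intro p' hp'; subst hp'; exact hy p' q (Or.inl (by omega))
    · intro p q
      by_cases h : p + q = n
      · exact hfy p q h (by omega)
      · rw [hy p q (Or.inl h), hx p q h, map_zero]
        have h0 : totD dL δL z p q = 0 := by
          apply totD_eq_zero
          · intro q' hq'; subst hq'; exact hz p q' (Or.inl (by omega))
          · intro p' hp'; subst hp'; exact hz p' q (Or.inl (by omega))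
        rw [h0, add_zero]
  · -- injectivity on cohomology of total complexes
    intro n y hy hyc hex
    obtain ⟨z, hzs, hfz⟩ := hex
    obtain _ | m := n
    · refine ⟨fun _ _ => 0, fun _ _ _ => rfl, ?_⟩
      intro p q
      have h0 : totD dK δK (fun _ _ => (0 : K _ _)) p q = 0 :=
        totD_eq_zero dK δK _ p q (fun _ _ => rfl) (fun _ _ => rfl)
      rw [h0]
      by_cases h : p + q = 0
      · have hp : p = 0 := by omega
        subst hp
        have hq : q = 0 := by omega
        subst hq
        apply hinj0 0
        · have h' := hyc 0 1; rwa [totD_zs] at h'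
        · rw [hfz 0 0, totD_zz]
      · exact hy p q h
    · have main : ∀ k, k ≤ m → ∃ (w : ∀ p q, K p q) (t : ∀ p q, L p q),
          (∀ a b, a + b ≠ m ∨ k < a → w a b = 0) ∧
          (∀ a b, a + b + 1 ≠ m ∨ k < a → t a b = 0) ∧
          (∀ a b, a + b = m + 1 → a ≤ k → totD dK δK w a b = y a b) ∧
          (∀ a b, a + b = m → a ≤ k → f a b (w a b) = z a b + totD dL δL t a b) := by
        intro k
        induction k with
        | zero =>
          intro _
          have hdy0 : dK 0 (m + 1) (y 0 (m + 1)) = 0 := by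
            have h := hyc 0 (m + 2); rwa [totD_zs] at h
          have hfy0 : f 0 (m + 1) (y 0 (m + 1)) = dL 0 m (z 0 m) := by
            have h := hfz 0 (m + 1); rwa [totD_zs] at h
          obtain ⟨w0, hw0⟩ := hinj 0 m (y 0 (m + 1)) hdy0 ⟨z 0 m, hfy0⟩
          have hde : dL 0 m (z 0 m - f 0 m w0) = 0 := by
            rw [map_sub, ← hfd, hw0, hfy0, sub_self]
          obtain ⟨u, hud, tf, htf, huf⟩ := rowSurj 0 m _ hde
          refine ⟨single 0 m (w0 + u), tf, ?_, ?_, ?_, ?_⟩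
          · intro a b h; apply single_ne; rintro ⟨rfl, rfl⟩
            rcases h with h | h <;> omega
          · intro a b h; apply htf; rintro ⟨rfl, hb⟩
            rcases h with h | h <;> omega
          · intro a b hab ha
            have h0 : a = 0 := by omega
            subst h0
            have h0 : b = m + 1 := by omega
            subst h0
            rw [totD_zs, single_self, map_add, hw0, hud, add_zero]
          · intro a b hab ha
            have h0 : a = 0 := by omega
            subst h0
            have h0 : b = m := by omega
            subst h0
            rw [single_self, map_add, huf]
            abel
        | succ k ih =>
          intro hk1
          obtain ⟨w, t, hw, ht, hcw, hfw⟩ := ih (by omega)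
          obtain ⟨q, hq⟩ : ∃ q, k + 1 + q = m := ⟨m - (k + 1), by omega⟩
          have hdwk : δK k (q + 1 + 1) (dK k (q + 1) (w k (q + 1)))
              = δK k (q + 1 + 1) (y k (q + 1 + 1)) :=
            delta_d_totD dK δK hδδK w k (q + 1) (y k (q + 1 + 1))
              (hcw k (q + 1 + 1) (by omega) le_rfl)
          have hdv : dK (k + 1) (q + 1)
              (y (k + 1) (q + 1) - δK k (q + 1) (w k (q + 1))) = 0 := by
            rw [map_sub]
            have h1 := hantiK k (q + 1) (w k (q + 1))
            rw [hdwk] at h1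
            have h2 := eq_neg_of_add_eq_zero_left h1
            have h3 := hyc (k + 1) (q + 1 + 1)
            rw [totD_ss] at h3
            rw [h2, eq_neg_of_add_eq_zero_left h3, sub_self]
          have hfwk : f k (q + 1) (w k (q + 1))
              = z k (q + 1) + totD dL δL t k (q + 1) :=
            hfw k (q + 1) (by omega) le_rfl
          have hfv : f (k + 1) (q + 1)
              (y (k + 1) (q + 1) - δK k (q + 1) (w k (q + 1)))
              = dL (k + 1) q (z (k + 1) q + δL k q (t k q)) := by
            rw [map_sub, hfδ, hfwk, map_add, delta_totD dL δL hδδL t k q,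
              hfz (k + 1) (q + 1), totD_ss]
            have h2 : δL k (q + 1) (dL k q (t k q)) = - dL (k + 1) q (δL k q (t k q)) :=
              eq_neg_of_add_eq_zero_right (hantiL k q (t k q))
            rw [h2, map_add]
            abel
          obtain ⟨w', hw'⟩ := hinj (k + 1) q _ hdv ⟨_, hfv⟩
          have hde : dL (k + 1) q
              (z (k + 1) q + δL k q (t k q) - f (k + 1) q w') = 0 := by
            rw [map_sub, ← hfd, hw', hfv, sub_self]
          obtain ⟨u, hud, tf, htf, huf⟩ := rowSurj (k + 1) q _ hde
          refine ⟨fun a b => w a b + single (k + 1) q (w' + u) a b,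
            fun a b => t a b + tf a b, ?_, ?_, ?_, ?_⟩
          · intro a b h
            show w a b + single (k + 1) q (w' + u) a b = 0
            rw [hw a b (h.imp id (fun h' => by omega)), zero_add]
            apply single_ne; rintro ⟨rfl, rfl⟩
            rcases h with h | h <;> omega
          · intro a b h
            show t a b + tf a b = 0
            rw [ht a b (h.imp id (fun h' => by omega)), zero_add]
            apply htf; rintro ⟨rfl, hb⟩
            rcases h with h | h <;> omega
          · intro a b hab ha
            rw [totD_add]
            by_cases hak : a ≤ k
            · rw [hcw a b hab hak]
              have h0 : totD dK δK (single (k + 1) q (w' + u)) a b = 0 := by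
                apply totD_eq_zero
                · intro q' hq'; apply single_ne; rintro ⟨rfl, rfl⟩; omega
                · intro p' hp'; apply single_ne; rintro ⟨rfl, rfl⟩; omega
              rw [h0, add_zero]
            · have h0 : a = k + 1 := by omega
              subst h0
              have h0 : b = q + 1 := by omega
              subst h0
              rw [totD_ss, totD_ss, single_self,
                single_ne _ _ _ (by rintro ⟨h1, _⟩; omega),
                hw (k + 1) q (Or.inr (by omega)), map_zero, map_zero, map_add, hw', hud]
              abel
          · intro a b hab ha
            show f a b (w a b + single (k + 1) q (w' + u) a b)
              = z a b + totD dL δL (fun a b => t a b + tf a b) a b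
            rw [map_add]
            by_cases hak : a ≤ k
            · rw [single_ne _ _ _ (by rintro ⟨rfl, rfl⟩; omega), map_zero, add_zero,
                hfw a b hab hak, totD_add]
              have h0 : totD dL δL tf a b = 0 := by
                apply totD_eq_zero
                · intro q' hq'; apply htf; rintro ⟨rfl, hb'⟩; omega
                · intro p' hp'; apply htf; rintro ⟨rfl, hb'⟩; omega
              rw [h0, add_zero]
            · have h0 : a = k + 1 := by omega
              subst h0
              have h0 : q = b := by omega
              subst h0
              rw [hw (k + 1) q (Or.inr (by omega)), map_zero, zero_add, single_self, map_add, huf,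
                totD_add,
                totD_succ_left dL δL t k q (fun q' hq' => ht (k + 1) q' (Or.inr (by omega)))]
              abel
      obtain ⟨w, t, hw, ht, hcw, hfw⟩ := main m le_rfl
      refine ⟨w, fun p q h => hw p q (Or.inl (by omega)), ?_⟩
      intro p q
      by_cases h1 : p + q = m + 1
      · by_cases h2 : p ≤ m
        · exact (hcw p q h1 h2).symm
        · have hp : p = m + 1 := by omega
          subst hp
          have hq0 : q = 0 := by omega
          subst hq0
          rw [totD_sz]
          have hr : y (m + 1) 0 - δK m 0 (w m 0) = 0 := by
            apply hinj0 (m + 1)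
            · rw [map_sub]
              have h1' := hantiK m 0 (w m 0)
              have hdw := delta_d_totD dK δK hδδK w m 0 (y m 1)
                (hcw m 1 (by omega) le_rfl)
              rw [hdw] at h1'
              have h2' := eq_neg_of_add_eq_zero_left h1'
              have h3 := hyc (m + 1) 1
              rw [totD_ss] at h3
              rw [h2', eq_neg_of_add_eq_zero_left h3, sub_self]
            · rw [map_sub, hfδ, hfw m 0 (by omega) le_rfl, map_add,
                delta_totD_zero dL δL hδδL t m, hfz (m + 1) 0, totD_sz, add_zero, sub_self]
          have h4 := sub_eq_zero.mp hr
          exact h4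
      · rw [hy p q (by omega)]
        refine (totD_eq_zero dK δK w p q ?_ ?_).symm
        · intro q' hq'; subst hq'; exact hw p q' (Or.inl (by omega))
        · intro p' hp'; subst hp'; exact hw p' q (Or.inl (by omega))

end DoubleComplexComparison
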